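/- Let x0, x1, x2, x3 be integers with x0 ≡ x1 ≡ 0 (mod 2), x2 ≡ x3 ≡ 1 (mod 2), (x0+x2)(x1+x3) ≡ ±1 (mod 8), and x0 ≢ x1 (mod 4). Then (x0-x2)^2 + (x1-x3)^2 ≡ -6 (mod 16); consequently ((x0+x2)^2 - (x1+x3)^2)((x0-x2)^2 + (x1-x3)^2) has a prime factor congruent to 5 modulo 8 (i.e., of the form 8k-3). -/

import Mathlib

lemma zkey : ∀ e f g h : ZMod 4,
    (2*e*f + e + f = 0 ∨ 2*e*f + e + f + 1 = 0) →
    (ZMod.castHom (by norm_num : (2:ℕ) ∣ 4) (ZMod 2)) (e - g) = 0 →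
    (ZMod.castHom (by norm_num : (2:ℕ) ∣ 4) (ZMod 2)) (f - h) = 0 →
    e + g - f - h = 2 →
    g*(g-1) + h*(h-1) = 2 := by decide

lemma sum_two_sq_mod8 (n : ℕ) (hn : n % 8 = 5) (x y : ℕ) (hxy : n = x^2 + y^2) :
    ∃ p : ℕ, p.Prime ∧ p % 8 = 5 ∧ p ∣ n := by
  by_contra hcon
  push_neg at hcon
  have hn0 : n ≠ 0 := by omega
  have key : (n : ZMod 8) = 1 := by
    conv_lhs => rw [← Nat.factorization_prod_pow_eq_self hn0]
    rw [Finsupp.prod]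
    push_cast
    apply Finset.prod_eq_one
    intro p hp
    rw [Nat.support_factorization] at hp
    have hpp : p.Prime := Nat.prime_of_mem_primeFactors hp
    have hpd : p ∣ n := Nat.dvd_of_mem_primeFactors hp
    have hne2 : ¬ (2 ∣ n) := by omega
    have hp2 : p ≠ 2 := by rintro rfl; exact hne2 hpd
    have hodd : p % 2 = 1 := (hpp.eq_two_or_odd).resolve_left hp2
    have h5 : p % 8 ≠ 5 := fun h => hcon p hpp h hpd
    have hcase : p % 8 = 1 ∨ p % 4 = 3 := by omega
    rcases hcase with h1 | h4
    · have : (p : ZMod 8) = 1 := by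
        rw [← ZMod.natCast_mod p 8, h1]; norm_num
      rw [this, one_pow]
    · have heven : Even (n.factorization p) := by
        have := Nat.eq_sq_add_sq_iff.mp ⟨x, y, hxy⟩ p hp h4
        rwa [Nat.factorization_def n hpp]
      obtain ⟨k, hk⟩ := heven
      have hsq : ((p : ZMod 8))^2 = 1 := by
        have h8 : p % 8 = 3 ∨ p % 8 = 7 := by omega
        rw [← ZMod.natCast_mod p 8]
        rcases h8 with h|h <;> rw [h] <;> decide
      rw [hk, ← two_mul, pow_mul, hsq, one_pow]
  rw [← ZMod.natCast_mod n 8, hn] at key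
  exact absurd key (by decide)

theorem D4_has_prime_factor_five_mod_eight (x0 x1 x2 x3 : ℤ)
    (h0 : x0 ≡ 0 [ZMOD 2]) (h1 : x1 ≡ 0 [ZMOD 2])
    (h2 : x2 ≡ 1 [ZMOD 2]) (h3 : x3 ≡ 1 [ZMOD 2])
    (hprod : (x0 + x2) * (x1 + x3) ≡ 1 [ZMOD 8] ∨
             (x0 + x2) * (x1 + x3) ≡ -1 [ZMOD 8])
    (hmod4 : ¬ (x0 ≡ x1 [ZMOD 4])) :
    (x0 - x2)^2 + (x1 - x3)^2 ≡ -6 [ZMOD 16] ∧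
    ∃ p : ℕ, p.Prime ∧ p % 8 = 5 ∧
      (p : ℤ) ∣ ((x0 + x2)^2 - (x1 + x3)^2) * ((x0 - x2)^2 + (x1 - x3)^2) := by
  have d0 := Int.ModEq.dvd h0
  have d1 := Int.ModEq.dvd h1
  have d2 := Int.ModEq.dvd h2
  have d3 := Int.ModEq.dvd h3
  obtain ⟨s, rfl⟩ : ∃ s, x0 = 2*s := ⟨x0/2, by omega⟩
  obtain ⟨t, rfl⟩ : ∃ t, x1 = 2*t := ⟨x1/2, by omega⟩
  obtain ⟨c, rfl⟩ : ∃ c, x2 = 2*c+1 := ⟨x2/2, by omega⟩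
  obtain ⟨d, rfl⟩ : ∃ d, x3 = 2*d+1 := ⟨x3/2, by omega⟩
  clear d0 d1 d2 d3 h0 h1 h2 h3
  set S : ZMod 4 := ((s : ℤ) : ZMod 4) with hS4
  set T : ZMod 4 := ((t : ℤ) : ZMod 4) with hT4
  set C : ZMod 4 := ((c : ℤ) : ZMod 4) with hC4
  set D : ZMod 4 := ((d : ℤ) : ZMod 4) with hD4
  have A1 : (2*(S+C)*(T+D) + (S+C) + (T+D) = 0 ∨
             2*(S+C)*(T+D) + (S+C) + (T+D) + 1 = 0) := by
    rcases hprod with hp | hp <;> [left; right] <;>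
      obtain ⟨k, hk⟩ := Int.ModEq.dvd hp
    · have h : ((2*(s+c)*(t+d) + (s+c) + (t+d) : ℤ) : ZMod 4) = 0 :=
        (ZMod.intCast_zmod_eq_zero_iff_dvd _ 4).mpr ⟨-k, by push_cast; linarith⟩
      push_cast at h
      linear_combination h
    · have h : ((2*(s+c)*(t+d) + (s+c) + (t+d) + 1 : ℤ) : ZMod 4) = 0 :=
        (ZMod.intCast_zmod_eq_zero_iff_dvd _ 4).mpr ⟨-k, by push_cast; linarith⟩
      push_cast at h
      linear_combination h
  have A2 : (ZMod.castHom (by norm_num : (2:ℕ) ∣ 4) (ZMod 2)) ((S+C) - (S-C)) = 0 := by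
    have h : (S+C) - (S-C) = ((2*c : ℤ) : ZMod 4) := by
      rw [hS4, hC4]; push_cast; ring
    rw [h, map_intCast]
    exact (ZMod.intCast_zmod_eq_zero_iff_dvd _ 2).mpr ⟨c, by push_cast; ring⟩
  have A3 : (ZMod.castHom (by norm_num : (2:ℕ) ∣ 4) (ZMod 2)) ((T+D) - (T-D)) = 0 := by
    have h : (T+D) - (T-D) = ((2*d : ℤ) : ZMod 4) := by
      rw [hT4, hD4]; push_cast; ring
    rw [h, map_intCast]
    exact (ZMod.intCast_zmod_eq_zero_iff_dvd _ 2).mpr ⟨d, by push_cast; ring⟩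
  have A4 : (S+C) + (S-C) - (T+D) - (T-D) = 2 := by
    have hnd : ¬ ((4:ℤ) ∣ 2*t - 2*s) := fun hd => hmod4 (Int.modEq_iff_dvd.mpr hd)
    have hd : (4:ℤ) ∣ (2*s - 2*t - 2) := by omega
    have h : ((2*s - 2*t - 2 : ℤ) : ZMod 4) = 0 :=
      (ZMod.intCast_zmod_eq_zero_iff_dvd _ 4).mpr (by exact_mod_cast hd)
    push_cast at h
    linear_combination h
  have key := zkey (S+C) (T+D) (S-C) (T-D) A1 A2 A3 A4
  have hGcast : (((s-c)*((s-c)-1) + (t-d)*((t-d)-1) - 2 : ℤ) : ZMod 4) = 0 := by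
    push_cast
    linear_combination key
  obtain ⟨k, hk⟩ := (ZMod.intCast_zmod_eq_zero_iff_dvd _ 4).mp hGcast
  rw [show ((4:ℕ):ℤ) = 4 by norm_num] at hk
  constructor
  · exact Int.modEq_iff_dvd.mpr ⟨-1-k, by linear_combination -4*hk⟩
  · have hm : ((s-c)+(t-d)-1)^2 + ((s-c)-(t-d))^2 = 8*k+5 := by linear_combination 2*hk
    set P : ℤ := (s-c)+(t-d)-1 with hP
    set Q : ℤ := (s-c)-(t-d) with hQ
    have hpos : (0:ℤ) ≤ P^2 + Q^2 := by positivity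
    set n : ℕ := (P^2+Q^2).toNat with hn
    have hcast : (n : ℤ) = P^2 + Q^2 := Int.toNat_of_nonneg hpos
    have hxy : n = P.natAbs^2 + Q.natAbs^2 := by
      have h : ((P.natAbs^2 + Q.natAbs^2 : ℕ) : ℤ) = P^2 + Q^2 := by
        push_cast
        rw [sq_abs, sq_abs]
      omega
    obtain ⟨p, hp, hp8, hpd⟩ := sum_two_sq_mod8 n (by omega) _ _ hxy
    refine ⟨p, hp, hp8, ?_⟩
    have hd1 : (p:ℤ) ∣ P^2 + Q^2 := by
      rw [← hcast]; exact_mod_cast hpd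
    have hd2 : (P^2+Q^2) ∣ (2*s - (2*c+1))^2 + (2*t - (2*d+1))^2 :=
      ⟨2, by rw [hP, hQ]; ring⟩
    exact Dvd.dvd.mul_left (hd1.trans hd2) _
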